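/- Let x_{k+1} = A x_k + B u_k, y_k = C x_k + D u_k be a controllable LTI system of state dimension n, and let (u^d, y^d) be a trajectory of length T whose input is persistently exciting of order L + n. Then for any L-long input-output trajectory (ū, ȳ) of the system there exists g with [H_L(u^d); H_L(y^d)] g = [ū; ȳ]. -/

import Mathlib

open Matrix

/-- The block Hankel matrix of depth `L` built from the data `z_0, …, z_{T-1}`,
with `T - L + 1` columns. -/
def hankel {d : ℕ} (z : ℕ → Fin d → ℝ) (L T : ℕ) :
    Matrix (Fin L × Fin d) (Fin (T - L + 1)) ℝ :=
  fun p j => z ((j : ℕ) + (p.1 : ℕ)) p.2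

/-- The Kalman controllability matrix `[B, AB, …, A^{n-1}B]`. -/
def ctrbMatrix {n m : ℕ} (A : Matrix (Fin n) (Fin n) ℝ)
    (B : Matrix (Fin n) (Fin m) ℝ) : Matrix (Fin n) (Fin n × Fin m) ℝ :=
  fun i p => (A ^ (p.1 : ℕ) * B) i p.2

/-- `(u, y)` restricted to `k < K` is an input–output trajectory of the system
`x⁺ = A x + B u`, `y = C x + D u`. -/
def IsTrajectory {n m p : ℕ} (A : Matrix (Fin n) (Fin n) ℝ)
    (B : Matrix (Fin n) (Fin m) ℝ) (C : Matrix (Fin p) (Fin n) ℝ)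
    (D : Matrix (Fin p) (Fin m) ℝ) (u : ℕ → Fin m → ℝ) (y : ℕ → Fin p → ℝ)
    (K : ℕ) : Prop :=
  ∃ x : ℕ → Fin n → ℝ,
    (∀ k, k + 1 < K → x (k + 1) = A.mulVec (x k) + B.mulVec (u k)) ∧
    (∀ k, k < K → y k = C.mulVec (x k) + D.mulVec (u k))

def etaN {m : ℕ} (L : ℕ) (η : Fin L × Fin m → ℝ) : ℕ → Fin m → ℝ :=
  fun l q => if h : l < L then η (⟨l, h⟩, q) else 0

def eAux {n m : ℕ} (L : ℕ) (A : Matrix (Fin n) (Fin n) ℝ) (B : Matrix (Fin n) (Fin m) ℝ)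
    (η : Fin L × Fin m → ℝ) (ζ : Fin n → ℝ) (i s : ℕ) (q : Fin m) : ℝ :=
  -(if i ≤ s then etaN L η (s - i) q else 0)
    - (if s < i then (ζ ᵥ* (A ^ (i - 1 - s) * B)) q else 0)

lemma vecMul_eq_zero_of_rank {ι κ : Type*} [Fintype ι] [Fintype κ] [DecidableEq ι] [DecidableEq κ]
    (M : Matrix ι κ ℝ) (h : M.rank = Fintype.card ι) (v : ι → ℝ) (hv : M.vecMul v = 0) : v = 0 := by
  have h1 : Mᵀ.rank = Fintype.card ι := by rw [M.rank_transpose] at *; exact h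
  have h2 := (Mᵀ.mulVecLin).finrank_range_add_finrank_ker
  rw [Matrix.rank] at h1
  have hker : LinearMap.ker Mᵀ.mulVecLin = ⊥ := by
    have : Module.finrank ℝ (ι → ℝ) = Fintype.card ι := Module.finrank_pi ℝ
    rw [this, h1] at h2
    exact Submodule.finrank_eq_zero.mp (by omega)
  have : Mᵀ.mulVec v = 0 := by rw [Matrix.mulVec_transpose]; exact hv
  have := LinearMap.ker_eq_bot.mp hker
  exact this (by simpa [Matrix.mulVecLin] using hv)

lemma mulVec_surjective_of_leftKernel {ι κ : Type*} [Fintype ι] [Fintype κ] [DecidableEq ι] [DecidableEq κ]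
    (M : Matrix ι κ ℝ) (h : ∀ v : ι → ℝ, M.vecMul v = 0 → v = 0) :
    Function.Surjective M.mulVec := by
  have hinj : Function.Injective Mᵀ.mulVecLin := by
    rw [← LinearMap.ker_eq_bot, LinearMap.ker_eq_bot']
    intro v hv
    exact h v (by simpa using hv)
  have h1 : Mᵀ.rank = Fintype.card ι := by
    rw [Matrix.rank, LinearMap.finrank_range_of_inj hinj, Module.finrank_pi]
  have h2 : M.rank = Fintype.card ι := by rw [← M.rank_transpose]; exact h1
  have : LinearMap.range M.mulVecLin = ⊤ := by
    apply Submodule.eq_top_of_finrank_eq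
    rw [← Matrix.rank, h2, Module.finrank_pi]
  intro b
  obtain ⟨g, hg⟩ := LinearMap.range_eq_top.mp this b
  exact ⟨g, by simpa using hg⟩

lemma cayley_hamilton_combo {n : ℕ} (A : Matrix (Fin n) (Fin n) ℝ) :
    ∃ α : Fin n → ℝ, A ^ n = ∑ i : Fin n, α i • A ^ (i : ℕ) := by
  refine ⟨fun i => -(A.charpoly.coeff i), ?_⟩
  have hdeg : A.charpoly.natDegree = n := by
    simpa only [Fintype.card_fin] using A.charpoly_natDegree_eq_dim
  have h0 := A.aeval_self_charpoly
  rw [Polynomial.aeval_eq_sum_range, hdeg, Finset.sum_range_succ] at h0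
  have hc : A.charpoly.coeff n = 1 := by
    have := A.charpoly_monic
    rw [Polynomial.Monic.def, Polynomial.leadingCoeff, hdeg] at this
    exact this
  rw [hc, one_smul] at h0
  have : A ^ n = -∑ i ∈ Finset.range n, A.charpoly.coeff i • A ^ i := by
    linear_combination (norm := abel) h0
  rw [this, Fin.sum_univ_eq_sum_range (fun i => -(A.charpoly.coeff i) • A ^ i), ← Finset.sum_neg_distrib]
  simp

lemma mulVec_sum {n m : ℕ} {ι : Type*} (s : Finset ι) (A : Matrix (Fin n) (Fin m) ℝ)
    (f : ι → Fin m → ℝ) : A.mulVec (∑ l ∈ s, f l) = ∑ l ∈ s, A.mulVec (f l) := by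
  ext i
  simp [Matrix.mulVec, dotProduct, Finset.mul_sum]
  rw [Finset.sum_comm]

lemma state_expansion {n m K : ℕ} (A : Matrix (Fin n) (Fin n) ℝ)
    (B : Matrix (Fin n) (Fin m) ℝ) (u : ℕ → Fin m → ℝ) (x : ℕ → Fin n → ℝ)
    (hx : ∀ k, k + 1 < K → x (k + 1) = A.mulVec (x k) + B.mulVec (u k)) :
    ∀ j k, j + k < K →
      x (j + k) = (A ^ k).mulVec (x j)
        + ∑ l ∈ Finset.range k, ((A ^ (k - 1 - l)) * B).mulVec (u (j + l)) := by
  intro j k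
  induction k with
  | zero => intro _; simp
  | succ k ih =>
    intro hk
    have hk' : j + k < K := by omega
    have h1 : x (j + (k+1)) = A.mulVec (x (j+k)) + B.mulVec (u (j+k)) := by
      have := hx (j + k) (by omega)
      rw [← Nat.add_assoc]
      exact this
    rw [h1, ih hk', Matrix.mulVec_add, mulVec_sum, Finset.sum_range_succ]
    have e1 : A.mulVec ((A ^ k).mulVec (x j)) = (A ^ (k+1)).mulVec (x j) := by
      rw [Matrix.mulVec_mulVec, ← pow_succ']
    have e2 : ∀ l ∈ Finset.range k,
        A.mulVec (((A ^ (k - 1 - l)) * B).mulVec (u (j + l)))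
          = ((A ^ (k + 1 - 1 - l)) * B).mulVec (u (j + l)) := by
      intro l hl
      have hlk := Finset.mem_range.mp hl
      rw [Matrix.mulVec_mulVec, ← Matrix.mul_assoc, ← pow_succ']
      have he : k - 1 - l + 1 = k + 1 - 1 - l := by omega
      rw [he]
    rw [Finset.sum_congr rfl e2]
    have e3 : ((A ^ (k + 1 - 1 - k)) * B).mulVec (u (j + k)) = B.mulVec (u (j+k)) := by
      simp
    rw [e3, e1]
    abel

lemma output_expansion {n m p K : ℕ} (A : Matrix (Fin n) (Fin n) ℝ)
    (B : Matrix (Fin n) (Fin m) ℝ) (C : Matrix (Fin p) (Fin n) ℝ)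
    (D : Matrix (Fin p) (Fin m) ℝ) (u : ℕ → Fin m → ℝ) (y : ℕ → Fin p → ℝ)
    (x : ℕ → Fin n → ℝ)
    (hx : ∀ k, k + 1 < K → x (k + 1) = A.mulVec (x k) + B.mulVec (u k))
    (hy : ∀ k, k < K → y k = C.mulVec (x k) + D.mulVec (u k)) :
    ∀ j k, j + k < K →
      y (j + k) = (C * A ^ k).mulVec (x j)
        + ∑ l ∈ Finset.range k, (C * (A ^ (k - 1 - l) * B)).mulVec (u (j + l))
        + D.mulVec (u (j + k)) := by
  intro j k hk
  rw [hy (j + k) hk, state_expansion A B u x hx j k hk, Matrix.mulVec_add, mulVec_sum]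
  congr 2
  · rw [Matrix.mulVec_mulVec]
  · exact Finset.sum_congr rfl fun l _ => by rw [Matrix.mulVec_mulVec]

lemma dot_sum {n : ℕ} {ι : Type*} (s : Finset ι) (v : Fin n → ℝ) (f : ι → Fin n → ℝ) :
    v ⬝ᵥ (∑ l ∈ s, f l) = ∑ l ∈ s, v ⬝ᵥ f l := by
  simp [dotProduct, Finset.mul_sum]
  rw [Finset.sum_comm]

lemma kernel_trivial {n m T L : ℕ}
    (A : Matrix (Fin n) (Fin n) ℝ) (B : Matrix (Fin n) (Fin m) ℝ)
    (hctrb : (ctrbMatrix A B).rank = n)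
    (ud : ℕ → Fin m → ℝ) (x : ℕ → Fin n → ℝ)
    (hx : ∀ k, k + 1 < T → x (k + 1) = A.mulVec (x k) + B.mulVec (ud k))
    (hpe : (hankel ud (L + n) T).rank = m * (L + n))
    (hLT : L + n ≤ T) (hL : 1 ≤ L)
    (η : Fin L × Fin m → ℝ) (ζ : Fin n → ℝ)
    (hker : ∀ j : Fin (T - L + 1),
      (∑ pq : Fin L × Fin m, η pq * ud ((j : ℕ) + (pq.1 : ℕ)) pq.2) + ζ ⬝ᵥ x (j : ℕ) = 0) :
    η = 0 ∧ ζ = 0 := by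
  -- ℕ-level kernel relation
  have hkerN : ∀ j, j ≤ T - L →
      (∑ l ∈ Finset.range L, ∑ q, etaN L η l q * ud (j + l) q) + ζ ⬝ᵥ x j = 0 := by
    intro j hj
    have h0 := hker ⟨j, by omega⟩
    have hconv : (∑ pq : Fin L × Fin m, η pq * ud (j + (pq.1 : ℕ)) pq.2)
        = ∑ l ∈ Finset.range L, ∑ q, etaN L η l q * ud (j + l) q := by
      rw [Fintype.sum_prod_type,
        ← Fin.sum_univ_eq_sum_range (fun l => ∑ q, etaN L η l q * ud (j + l) q) L]
      refine Finset.sum_congr rfl fun l _ => Finset.sum_congr rfl fun q _ => ?_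
      simp [etaN, l.isLt]
    rw [hconv] at h0
    exact h0
  -- key sum identity
  have Hsum : ∀ i j, i ≤ n → j + (L + n) ≤ T →
      (∑ sq : Fin (L + n) × Fin m, eAux L A B η ζ i (sq.1 : ℕ) sq.2 * ud (j + (sq.1 : ℕ)) sq.2)
        = (ζ ᵥ* (A ^ i)) ⬝ᵥ x j := by
    intro i j hi hj
    have hxe := state_expansion A B ud x hx j i (by omega)
    have hkj := hkerN (j + i) (by omega)
    have hRHS : (ζ ᵥ* (A ^ i)) ⬝ᵥ x j
        = -(∑ l ∈ Finset.range L, ∑ q, etaN L η l q * ud (j + i + l) q)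
          - ∑ l ∈ Finset.range i, (ζ ᵥ* (A ^ (i - 1 - l) * B)) ⬝ᵥ ud (j + l) := by
      rw [← Matrix.dotProduct_mulVec]
      have hx2 : (A ^ i) *ᵥ x j
          = x (j + i) - ∑ l ∈ Finset.range i, (A ^ (i - 1 - l) * B) *ᵥ ud (j + l) := by
        rw [hxe]; abel
      rw [hx2, dotProduct_sub, dot_sum]
      have hxki : ζ ⬝ᵥ x (j + i)
          = -(∑ l ∈ Finset.range L, ∑ q, etaN L η l q * ud (j + i + l) q) := by
        linarith [hkj]
      rw [hxki]
      congr 1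
      exact Finset.sum_congr rfl fun l _ => Matrix.dotProduct_mulVec _ _ _
    rw [hRHS, Fintype.sum_prod_type,
      Fin.sum_univ_eq_sum_range (fun s => ∑ q, eAux L A B η ζ i s q * ud (j + s) q) (L + n)]
    have hsplit : ∀ s, (∑ q, eAux L A B η ζ i s q * ud (j + s) q)
        = (if i ≤ s then -(∑ q, etaN L η (s - i) q * ud (j + s) q) else 0)
          + (if s < i then -((ζ ᵥ* (A ^ (i - 1 - s) * B)) ⬝ᵥ ud (j + s)) else 0) := by
      intro s
      rcases lt_or_ge s i with h | h
      · have h1 : ¬ i ≤ s := by omega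
        simp [eAux, h1, h, dotProduct, sub_mul, neg_mul, Finset.sum_neg_distrib]
      · have h2 : ¬ s < i := by omega
        simp [eAux, h, h2, sub_mul, neg_mul, Finset.sum_neg_distrib]
    rw [Finset.sum_congr rfl (fun s _ => hsplit s), Finset.sum_add_distrib, sub_eq_add_neg]
    congr 1
    · -- η part
      rw [Finset.range_eq_Ico,
        ← Finset.sum_Ico_consecutive _ (Nat.zero_le i) (by omega : i ≤ L + n)]
      have hz : (∑ s ∈ Finset.Ico 0 i,
          (if i ≤ s then -(∑ q, etaN L η (s - i) q * ud (j + s) q) else 0)) = 0 := by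
        apply Finset.sum_eq_zero
        intro s hs
        rw [if_neg]
        simp only [Finset.mem_Ico] at hs
        omega
      rw [hz, zero_add, Finset.sum_Ico_eq_sum_range]
      have hterm : ∀ l, (if i ≤ i + l then
            -(∑ q, etaN L η (i + l - i) q * ud (j + (i + l)) q) else 0)
          = -(∑ q, etaN L η l q * ud (j + i + l) q) := by
        intro l
        rw [if_pos (by omega), Nat.add_sub_cancel_left, ← Nat.add_assoc]
      rw [Finset.sum_congr rfl (fun l _ => hterm l), Finset.sum_neg_distrib]
      congr 1
      have hss := Finset.sum_subset
        (f := fun l => ∑ q, etaN L η l q * ud (j + i + l) q)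
        (Finset.range_subset_range.mpr (by omega : L ≤ L + n - i))
        (fun l _ hl => by
          have : ¬ l < L := by simp only [Finset.mem_range] at hl; omega
          simp [etaN, this])
      exact hss.symm
    · -- ζ part
      rw [← Finset.sum_subset (Finset.range_subset_range.mpr (by omega : i ≤ L + n))
        (fun s _ hs => by rw [if_neg (by simp only [Finset.mem_range] at hs; omega)])]
      rw [Finset.sum_congr rfl (fun s hs => if_pos (Finset.mem_range.mp hs)),
        Finset.sum_neg_distrib]
  obtain ⟨α, hα⟩ := cayley_hamilton_combo A
  -- combination is in the left kernel of the big Hankel matrix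
  have hc0 : (hankel ud (L + n) T).vecMul
      (fun sq => eAux L A B η ζ n (sq.1 : ℕ) sq.2
        - ∑ i : Fin n, α i * eAux L A B η ζ (i : ℕ) (sq.1 : ℕ) sq.2) = 0 := by
    funext j
    have hj : (j : ℕ) + (L + n) ≤ T := by have := j.isLt; omega
    have hsum_smul : (∑ i : Fin n, α i • A ^ (i : ℕ)) *ᵥ x (j : ℕ)
        = ∑ i : Fin n, α i • ((A ^ (i : ℕ)) *ᵥ x (j : ℕ)) := by
      calc (∑ i : Fin n, α i • A ^ (i : ℕ)) *ᵥ x (j : ℕ)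
          = Matrix.toLin' (∑ i : Fin n, α i • A ^ (i : ℕ)) (x (j : ℕ)) := by
            rw [Matrix.toLin'_apply]
        _ = ∑ i : Fin n, α i • ((A ^ (i : ℕ)) *ᵥ x (j : ℕ)) := by
            rw [map_sum]
            simp only [LinearMap.sum_apply, map_smul, LinearMap.smul_apply, Matrix.toLin'_apply]
    have hφ : (ζ ᵥ* (A ^ n)) ⬝ᵥ x (j : ℕ)
        = ∑ i : Fin n, α i * ((ζ ᵥ* (A ^ (i : ℕ))) ⬝ᵥ x (j : ℕ)) := by
      rw [← Matrix.dotProduct_mulVec, hα, hsum_smul, dot_sum]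
      refine Finset.sum_congr rfl fun i _ => ?_
      rw [dotProduct_smul, smul_eq_mul, Matrix.dotProduct_mulVec]
    have hpi : ((hankel ud (L + n) T).vecMul
        (fun sq => eAux L A B η ζ n (sq.1 : ℕ) sq.2
          - ∑ i : Fin n, α i * eAux L A B η ζ (i : ℕ) (sq.1 : ℕ) sq.2)) j
        = ∑ sq : Fin (L + n) × Fin m,
            (eAux L A B η ζ n (sq.1 : ℕ) sq.2
              - ∑ i : Fin n, α i * eAux L A B η ζ (i : ℕ) (sq.1 : ℕ) sq.2)
            * ud ((j : ℕ) + (sq.1 : ℕ)) sq.2 := by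
      simp [Matrix.vecMul, dotProduct, hankel]
    rw [Pi.zero_apply, hpi]
    have hexp : ∀ sq : Fin (L + n) × Fin m,
        (eAux L A B η ζ n (sq.1 : ℕ) sq.2
          - ∑ i : Fin n, α i * eAux L A B η ζ (i : ℕ) (sq.1 : ℕ) sq.2)
          * ud ((j : ℕ) + (sq.1 : ℕ)) sq.2
        = eAux L A B η ζ n (sq.1 : ℕ) sq.2 * ud ((j : ℕ) + (sq.1 : ℕ)) sq.2
          - ∑ i : Fin n, α i * (eAux L A B η ζ (i : ℕ) (sq.1 : ℕ) sq.2
            * ud ((j : ℕ) + (sq.1 : ℕ)) sq.2) := by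
      intro sq
      rw [sub_mul, Finset.sum_mul]
      congr 1
      exact Finset.sum_congr rfl fun i _ => by ring
    rw [Finset.sum_congr rfl (fun sq _ => hexp sq), Finset.sum_sub_distrib,
      Hsum n (j : ℕ) le_rfl hj]
    rw [Finset.sum_comm]
    have : ∀ i : Fin n, (∑ sq : Fin (L + n) × Fin m,
        α i * (eAux L A B η ζ (i : ℕ) (sq.1 : ℕ) sq.2 * ud ((j : ℕ) + (sq.1 : ℕ)) sq.2))
        = α i * ((ζ ᵥ* (A ^ (i : ℕ))) ⬝ᵥ x (j : ℕ)) := by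
      intro i
      rw [← Finset.mul_sum, Hsum (i : ℕ) (j : ℕ) (le_of_lt i.isLt) hj]
    rw [Finset.sum_congr rfl (fun i _ => this i), ← hφ, sub_self]
  have hc : (fun sq : Fin (L + n) × Fin m => eAux L A B η ζ n (sq.1 : ℕ) sq.2
      - ∑ i : Fin n, α i * eAux L A B η ζ (i : ℕ) (sq.1 : ℕ) sq.2) = 0 := by
    apply vecMul_eq_zero_of_rank _ _ _ hc0
    rw [hpe]
    simp [mul_comm]
  have hcz : ∀ s, s < L + n → ∀ q, eAux L A B η ζ n s q
      = ∑ i : Fin n, α i * eAux L A B η ζ (i : ℕ) s q := by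
    intro s hs q
    have := congrFun hc (⟨s, hs⟩, q)
    simpa [sub_eq_zero] using this
  -- η = 0
  have hηN : ∀ k r q, r + k + 1 = L → etaN L η r q = 0 := by
    intro k
    induction k using Nat.strong_induction_on with
    | _ k IH =>
      intro r q hrk
      have hs : n + r < L + n := by omega
      have h1 := hcz (n + r) hs q
      have hLeft : eAux L A B η ζ n (n + r) q = -(etaN L η r q) := by
        simp [eAux, Nat.add_sub_cancel_left, (by omega : ¬ (n + r < n))]
      have hRight : ∀ i : Fin n, eAux L A B η ζ (i : ℕ) (n + r) q = 0 := by
        intro i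
        have hi := i.isLt
        have h2 : ¬ (n + r < (i : ℕ)) := by omega
        have h3 : ((i : ℕ) ≤ n + r) := by omega
        have hval : etaN L η (n + r - (i : ℕ)) q = 0 := by
          by_cases hr' : n + r - (i : ℕ) < L
          · exact IH (L - 1 - (n + r - (i : ℕ))) (by omega) (n + r - (i : ℕ)) q (by omega)
          · simp [etaN, hr']
        simp [eAux, h2, h3, hval]
      rw [hLeft, Finset.sum_congr rfl (fun i _ => by rw [hRight i, mul_zero])] at h1
      simpa using h1
  have hηN0 : ∀ r q, etaN L η r q = 0 := by
    intro r q
    by_cases hr : r < L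
    · exact hηN (L - 1 - r) r q (by omega)
    · simp [etaN, hr]
  have hη0 : η = 0 := by
    funext pq
    have := hηN0 (pq.1 : ℕ) pq.2
    simpa [etaN, pq.1.isLt] using this
  refine ⟨hη0, ?_⟩
  -- ζ = 0
  have hζB : ∀ k, k < n → ∀ q, (ζ ᵥ* (A ^ k * B)) q = 0 := by
    intro k
    induction k using Nat.strong_induction_on with
    | _ k IH =>
      intro hk q
      have hs : n - 1 - k < L + n := by omega
      have h1 := hcz (n - 1 - k) hs q
      have hLeft : eAux L A B η ζ n (n - 1 - k) q = -((ζ ᵥ* (A ^ k * B)) q) := by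
        have h2 : n - 1 - k < n := by omega
        have he : n - 1 - (n - 1 - k) = k := by omega
        simp [eAux, hηN0, h2, he]
      have hRight : ∀ i : Fin n, eAux L A B η ζ (i : ℕ) (n - 1 - k) q = 0 := by
        intro i
        by_cases h2 : n - 1 - k < (i : ℕ)
        · have := IH ((i : ℕ) - 1 - (n - 1 - k)) (by omega) (by omega) q
          simp [eAux, hηN0, h2, this]
        · simp [eAux, hηN0, h2]
      rw [hLeft, Finset.sum_congr rfl (fun i _ => by rw [hRight i, mul_zero])] at h1
      simpa using h1
  apply vecMul_eq_zero_of_rank (ctrbMatrix A B) (by simpa using hctrb)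
  funext pq
  have : (ctrbMatrix A B).vecMul ζ pq = (ζ ᵥ* (A ^ (pq.1 : ℕ) * B)) pq.2 := by
    simp [Matrix.vecMul, dotProduct, ctrbMatrix]
  rw [this, hζB (pq.1 : ℕ) pq.1.isLt pq.2]
  rfl


lemma sum_mulVec_weighted {a b N : ℕ} (M : Matrix (Fin a) (Fin b) ℝ)
    (v : Fin N → Fin b → ℝ) (g : Fin N → ℝ) (w : Fin b → ℝ)
    (hw : ∀ i, (∑ j, v j i * g j) = w i) (q : Fin a) :
    (∑ j, (M *ᵥ v j) q * g j) = (M *ᵥ w) q := by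
  simp only [Matrix.mulVec, dotProduct]
  calc (∑ j, (∑ i, M q i * v j i) * g j)
      = ∑ j, ∑ i, M q i * (v j i * g j) := by
        refine Finset.sum_congr rfl fun j _ => ?_
        rw [Finset.sum_mul]
        exact Finset.sum_congr rfl fun i _ => by ring
    _ = ∑ i, M q i * ∑ j, v j i * g j := by
        rw [Finset.sum_comm]
        exact Finset.sum_congr rfl fun i _ => by rw [Finset.mul_sum]
    _ = ∑ i, M q i * w i := Finset.sum_congr rfl fun i _ => by rw [hw i]

/-- Willems' Fundamental Lemma: for a controllable LTI system, if the data input is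
persistently exciting of order `L + n`, then every `L`-long input–output trajectory
of the system is a linear combination of the columns of the data Hankel matrices. -/
theorem willems_fundamental_lemma {n m p : ℕ}
    (A : Matrix (Fin n) (Fin n) ℝ) (B : Matrix (Fin n) (Fin m) ℝ)
    (C : Matrix (Fin p) (Fin n) ℝ) (D : Matrix (Fin p) (Fin m) ℝ)
    (hctrb : (ctrbMatrix A B).rank = n)
    (ud : ℕ → Fin m → ℝ) (yd : ℕ → Fin p → ℝ) (T L : ℕ) (hLT : L + n ≤ T)
    (hdata : IsTrajectory A B C D ud yd T)
    (hpe : (hankel ud (L + n) T).rank = m * (L + n))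
    (ubar : ℕ → Fin m → ℝ) (ybar : ℕ → Fin p → ℝ)
    (htraj : IsTrajectory A B C D ubar ybar L) :
    ∃ g : Fin (T - L + 1) → ℝ,
      (hankel ud L T).mulVec g = (fun q : Fin L × Fin m => ubar (q.1 : ℕ) q.2) ∧
      (hankel yd L T).mulVec g = (fun q : Fin L × Fin p => ybar (q.1 : ℕ) q.2) := by
  rcases Nat.eq_zero_or_pos L with hL0 | hL
  · subst hL0
    exact ⟨0, funext fun q => q.1.elim0, funext fun q => q.1.elim0⟩
  obtain ⟨x, hx1, hx2⟩ := hdata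
  obtain ⟨xb, hb1, hb2⟩ := htraj
  set M : Matrix ((Fin L × Fin m) ⊕ Fin n) (Fin (T - L + 1)) ℝ :=
    fun r j => Sum.elim (fun pq : Fin L × Fin m => ud ((j : ℕ) + (pq.1 : ℕ)) pq.2)
      (fun i => x (j : ℕ) i) r with hM
  have hsurj : Function.Surjective M.mulVec := by
    apply mulVec_surjective_of_leftKernel
    intro v hv
    have hker : ∀ j : Fin (T - L + 1),
        (∑ pq : Fin L × Fin m, v (Sum.inl pq) * ud ((j : ℕ) + (pq.1 : ℕ)) pq.2)
          + (fun i => v (Sum.inr i)) ⬝ᵥ x (j : ℕ) = 0 := by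
      intro j
      have h0 := congrFun hv j
      simpa [Matrix.vecMul, dotProduct, hM, Fintype.sum_sum_type] using h0
    obtain ⟨hη, hζ⟩ := kernel_trivial A B hctrb ud x hx1 hpe hLT hL
      (fun pq => v (Sum.inl pq)) (fun i => v (Sum.inr i)) hker
    funext r
    cases r with
    | inl pq => exact congrFun hη pq
    | inr i => exact congrFun hζ i
  obtain ⟨g, hg⟩ := hsurj (Sum.elim (fun pq : Fin L × Fin m => ubar (pq.1 : ℕ) pq.2) (xb 0))
  have hinput : ∀ pq : Fin L × Fin m,
      (∑ j : Fin (T - L + 1), ud ((j : ℕ) + (pq.1 : ℕ)) pq.2 * g j) = ubar (pq.1 : ℕ) pq.2 := by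
    intro pq
    have := congrFun hg (Sum.inl pq)
    simpa [Matrix.mulVec, dotProduct, hM] using this
  have hstate : ∀ i, (∑ j : Fin (T - L + 1), x (j : ℕ) i * g j) = xb 0 i := by
    intro i
    have := congrFun hg (Sum.inr i)
    simpa [Matrix.mulVec, dotProduct, hM] using this
  refine ⟨g, ?_, ?_⟩
  · funext pq
    have := hinput pq
    simpa [Matrix.mulVec, dotProduct, hankel] using this
  · funext tq
    obtain ⟨t, q⟩ := tq
    have ht := t.isLt
    have hyd : ∀ j : Fin (T - L + 1), yd ((j : ℕ) + (t : ℕ))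
        = (C * A ^ (t : ℕ)) *ᵥ x (j : ℕ)
          + ∑ l ∈ Finset.range (t : ℕ),
              (C * (A ^ ((t : ℕ) - 1 - l) * B)) *ᵥ ud ((j : ℕ) + l)
          + D *ᵥ ud ((j : ℕ) + (t : ℕ)) :=
      fun j => output_expansion A B C D ud yd x hx1 hx2 (j : ℕ) (t : ℕ)
        (by have := j.isLt; omega)
    have hyb : ybar (t : ℕ)
        = (C * A ^ (t : ℕ)) *ᵥ xb 0
          + ∑ l ∈ Finset.range (t : ℕ),
              (C * (A ^ ((t : ℕ) - 1 - l) * B)) *ᵥ ubar l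
          + D *ᵥ ubar (t : ℕ) := by
      have h0 := output_expansion A B C D ubar ybar xb hb1 hb2 0 (t : ℕ) (by omega)
      simpa using h0
    show (∑ j : Fin (T - L + 1), hankel yd L T (t, q) j * g j) = ybar (t : ℕ) q
    have hstep : ∀ j : Fin (T - L + 1), hankel yd L T (t, q) j * g j
        = ((C * A ^ (t : ℕ)) *ᵥ x (j : ℕ)) q * g j
          + (∑ l ∈ Finset.range (t : ℕ),
              ((C * (A ^ ((t : ℕ) - 1 - l) * B)) *ᵥ ud ((j : ℕ) + l)) q) * g j
          + (D *ᵥ ud ((j : ℕ) + (t : ℕ))) q * g j := by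
      intro j
      have : hankel yd L T (t, q) j = yd ((j : ℕ) + (t : ℕ)) q := rfl
      rw [this, hyd j]
      simp only [Pi.add_apply, Finset.sum_apply]
      ring
    rw [Finset.sum_congr rfl (fun j _ => hstep j), Finset.sum_add_distrib,
      Finset.sum_add_distrib]
    have hT1 : (∑ j : Fin (T - L + 1), ((C * A ^ (t : ℕ)) *ᵥ x (j : ℕ)) q * g j)
        = ((C * A ^ (t : ℕ)) *ᵥ xb 0) q :=
      sum_mulVec_weighted _ _ _ _ hstate q
    have hT3 : (∑ j : Fin (T - L + 1), (D *ᵥ ud ((j : ℕ) + (t : ℕ))) q * g j) = (D *ᵥ ubar (t : ℕ)) q :=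
      sum_mulVec_weighted _ _ _ _ (fun i => hinput (t, i)) q
    have hT2 : (∑ j : Fin (T - L + 1), (∑ l ∈ Finset.range (t : ℕ),
          ((C * (A ^ ((t : ℕ) - 1 - l) * B)) *ᵥ ud ((j : ℕ) + l)) q) * g j)
        = ∑ l ∈ Finset.range (t : ℕ), ((C * (A ^ ((t : ℕ) - 1 - l) * B)) *ᵥ ubar l) q := by
      calc (∑ j : Fin (T - L + 1), (∑ l ∈ Finset.range (t : ℕ),
            ((C * (A ^ ((t : ℕ) - 1 - l) * B)) *ᵥ ud ((j : ℕ) + l)) q) * g j)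
          = ∑ j : Fin (T - L + 1), ∑ l ∈ Finset.range (t : ℕ),
              ((C * (A ^ ((t : ℕ) - 1 - l) * B)) *ᵥ ud ((j : ℕ) + l)) q * g j := by
            exact Finset.sum_congr rfl fun j _ => Finset.sum_mul ..
        _ = ∑ l ∈ Finset.range (t : ℕ), ∑ j : Fin (T - L + 1),
              ((C * (A ^ ((t : ℕ) - 1 - l) * B)) *ᵥ ud ((j : ℕ) + l)) q * g j :=
            Finset.sum_comm
        _ = ∑ l ∈ Finset.range (t : ℕ), ((C * (A ^ ((t : ℕ) - 1 - l) * B)) *ᵥ ubar l) q := by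
            refine Finset.sum_congr rfl fun l hl => ?_
            have hlL : l < L := by have := Finset.mem_range.mp hl; omega
            exact sum_mulVec_weighted _ _ _ _ (fun i => hinput (⟨l, hlL⟩, i)) q
    rw [hT1, hT2, hT3, hyb]
    simp only [Pi.add_apply, Finset.sum_apply]
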